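/- Under consistency, positivity, and the tilting assumption at level t, the mean potential outcome is identified from the observed-data distribution: E[Y(t)] = E[ μ_t(Y;X)·π_t(X) + ( μ_t(Y e^{γ_t s_t(Y)};X) / μ_t(e^{γ_t s_t(Y)};X) )·π_{1−t}(X) ]. -/

import Mathlib

open MeasureTheory Real


private lemma sensitivity_aux (A B C D q : ℝ) (hq : q ≠ 0) (hB : B ≠ 0)
    (h : A * B = C * D) : (C / q) / (B / q) * D = A := by
  have h1 : C / q / (B / q) = C / B := by field_simp
  rw [h1, div_mul_eq_mul_div, ← h, mul_div_assoc, div_self hB, mul_one]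

/-- Under consistency, positivity and the tilting assumption at level `t`,
the mean potential outcome is identified:
`E[Y(t)] = E[ μ_t(Y;X)·π_t(X) + (μ_t(Y e^{γ_t s_t(Y)};X)/μ_t(e^{γ_t s_t(Y)};X))·π_{1-t}(X) ]`. -/
theorem sensitivity_identification_mean_potential_outcome
    {Ω : Type*} [MeasurableSpace Ω] (P : Measure Ω) [IsProbabilityMeasure P]
    {p : ℕ} (X : Ω → (Fin p → ℝ)) (T : Ω → ℝ) (Y : Ω → ℝ) (Y0 Y1 : Ω → ℝ)
    (hX : Measurable X) (hT : Measurable T) (hY : Measurable Y)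
    (hY0 : Measurable Y0) (hY1 : Measurable Y1)
    (hTval : ∀ ω, T ω = 0 ∨ T ω = 1)
    -- fixed treatment level `t ∈ {0,1}` and the corresponding potential outcome `Yt`
    (t : ℝ) (ht : t = 0 ∨ t = 1)
    (Yt : Ω → ℝ) (hYt : Yt = if t = 1 then Y1 else Y0)
    -- consistency : `Y = Y(T)`
    (hcons : ∀ᵐ ω ∂P, Y ω = if T ω = 1 then Y1 ω else Y0 ω)
    -- tilting function and sensitivity parameter
    (s : ℝ → ℝ) (hs : Measurable s) (γ : ℝ)
    -- versions of the conditional treatment probabilities given `σ(X)`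
    (πt πs : (Fin p → ℝ) → ℝ) (hπt : Measurable πt) (hπs : Measurable πs)
    (hπtv : (fun ω => πt (X ω)) =ᵐ[P]
      P[(fun ω => if T ω = t then (1 : ℝ) else 0) | MeasurableSpace.comap X inferInstance])
    (hπsv : (fun ω => πs (X ω)) =ᵐ[P]
      P[(fun ω => if T ω = 1 - t then (1 : ℝ) else 0) | MeasurableSpace.comap X inferInstance])
    -- positivity
    (ε : ℝ) (hε : 0 < ε)
    (hpos : ∀ᵐ ω ∂P, ε ≤ πt (X ω) ∧ πt (X ω) ≤ 1 - ε)
    -- integrability assumptions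
    (hYtInt : Integrable Yt P)
    (hExpInt : Integrable (fun ω => Real.exp (γ * s (Yt ω))) P)
    (hYtExpInt : Integrable (fun ω => Yt ω * Real.exp (γ * s (Yt ω))) P)
    -- the tilted conditional expectation is a.s. positive
    (hCpos : ∀ᵐ ω ∂P, 0 <
      (P[(fun ω => Real.exp (γ * s (Yt ω)) * (if T ω = t then (1 : ℝ) else 0)) |
        MeasurableSpace.comap X inferInstance]) ω)
    -- tilting assumption at level `t` (for every bounded measurable `g`, and for `g = id`)
    (htilt : ∀ g : ℝ → ℝ, Measurable g → ((∃ C, ∀ y, |g y| ≤ C) ∨ g = id) →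
      ∀ᵐ ω ∂P,
        (P[(fun ω => g (Yt ω) * (if T ω = 1 - t then (1 : ℝ) else 0)) |
          MeasurableSpace.comap X inferInstance]) ω *
        (P[(fun ω => Real.exp (γ * s (Yt ω)) * (if T ω = t then (1 : ℝ) else 0)) |
          MeasurableSpace.comap X inferInstance]) ω =
        (P[(fun ω => g (Yt ω) * Real.exp (γ * s (Yt ω)) * (if T ω = t then (1 : ℝ) else 0)) |
          MeasurableSpace.comap X inferInstance]) ω *
        (P[(fun ω => if T ω = 1 - t then (1 : ℝ) else 0) |
          MeasurableSpace.comap X inferInstance]) ω)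
    -- versions of the conditional means `μ_t(g(Y); X) = E[g(Y)1{T=t}|σ(X)]/π_t(X)`
    (muY muE muYE : (Fin p → ℝ) → ℝ)
    (hmuY : (fun ω => muY (X ω)) =ᵐ[P] fun ω =>
      (P[(fun ω => Y ω * (if T ω = t then (1 : ℝ) else 0)) |
        MeasurableSpace.comap X inferInstance]) ω / πt (X ω))
    (hmuE : (fun ω => muE (X ω)) =ᵐ[P] fun ω =>
      (P[(fun ω => Real.exp (γ * s (Y ω)) * (if T ω = t then (1 : ℝ) else 0)) |
        MeasurableSpace.comap X inferInstance]) ω / πt (X ω))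
    (hmuYE : (fun ω => muYE (X ω)) =ᵐ[P] fun ω =>
      (P[(fun ω => Y ω * Real.exp (γ * s (Y ω)) * (if T ω = t then (1 : ℝ) else 0)) |
        MeasurableSpace.comap X inferInstance]) ω / πt (X ω)) :
    ∫ ω, Yt ω ∂P =
      ∫ ω, (muY (X ω) * πt (X ω) + (muYE (X ω) / muE (X ω)) * πs (X ω)) ∂P := by

  classical
  have hm : MeasurableSpace.comap X inferInstance ≤ _ := hX.comap_le
  haveI : SigmaFinite (P.trim hm) := by infer_instance
  have hind : ∀ c : ℝ, Measurable (fun ω => if T ω = c then (1:ℝ) else 0) := fun c =>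
    Measurable.ite (hT (measurableSet_singleton c)) measurable_const measurable_const
  have hmulInt : ∀ (f : Ω → ℝ), Integrable f P → ∀ c : ℝ,
      Integrable (fun ω => f ω * (if T ω = c then (1:ℝ) else 0)) P := by
    intro f hf c
    have h1 : Integrable (fun ω => (if T ω = c then (1:ℝ) else 0) * f ω) P :=
      hf.bdd_mul (c := 1) (hind c).aestronglyMeasurable (Filter.Eventually.of_forall fun ω => by split <;> simp)
    simpa [mul_comm] using h1
  have hYeq : ∀ᵐ ω ∂P, T ω = t → Y ω = Yt ω := by
    filter_upwards [hcons] with ω h hTt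
    rcases ht with rfl | rfl
    · simp [hYt, h, hTt]
    · simp [hYt, h, hTt]
  have eYt : (fun ω => Yt ω * (if T ω = t then (1:ℝ) else 0)) =ᵐ[P]
      (fun ω => Y ω * (if T ω = t then (1:ℝ) else 0)) := by
    filter_upwards [hYeq] with ω h
    by_cases hTt : T ω = t
    · simp [hTt, h hTt]
    · simp [hTt]
  have eE : (fun ω => Real.exp (γ * s (Y ω)) * (if T ω = t then (1:ℝ) else 0)) =ᵐ[P]
      (fun ω => Real.exp (γ * s (Yt ω)) * (if T ω = t then (1:ℝ) else 0)) := by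
    filter_upwards [hYeq] with ω h
    by_cases hTt : T ω = t
    · simp [hTt, h hTt]
    · simp [hTt]
  have eYE : (fun ω => Y ω * Real.exp (γ * s (Y ω)) * (if T ω = t then (1:ℝ) else 0)) =ᵐ[P]
      (fun ω => Yt ω * Real.exp (γ * s (Yt ω)) * (if T ω = t then (1:ℝ) else 0)) := by
    filter_upwards [hYeq] with ω h
    by_cases hTt : T ω = t
    · simp [hTt, h hTt]
    · simp [hTt]
  have htid := htilt id measurable_id (Or.inr rfl)
  simp only [id_eq] at htid
  have hπpos : ∀ᵐ ω ∂P, πt (X ω) ≠ 0 := by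
    filter_upwards [hpos] with ω h
    have := h.1; intro h0; rw [h0] at this; linarith
  have h1 : (fun ω => muY (X ω) * πt (X ω)) =ᵐ[P]
      fun ω => (P[(fun ω => Yt ω * (if T ω = t then (1:ℝ) else 0)) | MeasurableSpace.comap X inferInstance]) ω := by
    filter_upwards [hmuY, hπpos, condExp_congr_ae (μ := P) (m := MeasurableSpace.comap X inferInstance) eYt] with ω h hne hce
    rw [h, hce, div_mul_cancel₀ _ hne]
  have h2 : (fun ω => (muYE (X ω) / muE (X ω)) * πs (X ω)) =ᵐ[P]
      fun ω => (P[(fun ω => Yt ω * (if T ω = 1 - t then (1:ℝ) else 0)) | MeasurableSpace.comap X inferInstance]) ω := by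
    filter_upwards [hmuYE, hmuE, hπpos, hCpos, htid, hπsv,
      condExp_congr_ae (μ := P) (m := MeasurableSpace.comap X inferInstance) eE, condExp_congr_ae (μ := P) (m := MeasurableSpace.comap X inferInstance) eYE]
      with ω hYE hE hne hBpos htw hD hceE hceYE
    rw [hYE, hE, hceYE, hceE, hD]
    have hBne : (P[(fun ω => Real.exp (γ * s (Yt ω)) * (if T ω = t then (1:ℝ) else 0)) | MeasurableSpace.comap X inferInstance]) ω ≠ 0 :=
      ne_of_gt hBpos
    exact sensitivity_aux _ _ _ _ _ hne hBne htw
  calc ∫ ω, Yt ω ∂P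
      = ∫ ω, (Yt ω * (if T ω = t then (1:ℝ) else 0)
          + Yt ω * (if T ω = 1 - t then (1:ℝ) else 0)) ∂P := by
        refine integral_congr_ae (Filter.Eventually.of_forall fun ω => ?_)
        rcases ht with rfl | rfl <;> rcases hTval ω with h | h <;> norm_num [h]
    _ = (∫ ω, Yt ω * (if T ω = t then (1:ℝ) else 0) ∂P)
          + ∫ ω, Yt ω * (if T ω = 1 - t then (1:ℝ) else 0) ∂P :=
        integral_add (hmulInt Yt hYtInt t) (hmulInt Yt hYtInt (1 - t))
    _ = (∫ ω, (P[(fun ω => Yt ω * (if T ω = t then (1:ℝ) else 0)) | MeasurableSpace.comap X inferInstance]) ω ∂P)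
          + ∫ ω, (P[(fun ω => Yt ω * (if T ω = 1 - t then (1:ℝ) else 0)) | MeasurableSpace.comap X inferInstance]) ω ∂P := by
        rw [integral_condExp hm, integral_condExp hm]
    _ = ∫ ω, ((P[(fun ω => Yt ω * (if T ω = t then (1:ℝ) else 0)) | MeasurableSpace.comap X inferInstance]) ω
          + (P[(fun ω => Yt ω * (if T ω = 1 - t then (1:ℝ) else 0)) | MeasurableSpace.comap X inferInstance]) ω) ∂P :=
        (integral_add integrable_condExp integrable_condExp).symm
    _ = ∫ ω, (muY (X ω) * πt (X ω) + (muYE (X ω) / muE (X ω)) * πs (X ω)) ∂P := by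
        refine integral_congr_ae ?_
        filter_upwards [h1, h2] with ω a b
        rw [a, b]
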